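/- If (D, ε, δ) is a comonad on Set and C = S ◁ P is a container with D = ⟦C⟧, then defining s ↓ p = snd (t^δ s) p, o {s} = q^ε {s} ⋆, and p ⊕ {s} p' = q^δ {s} (p, p'), where t^ε ◁ q^ε = ⌜e ∘ ε⌝ and t^δ ◁ q^δ = ⌜m ∘ δ⌝, yields a directed container: the five directed container laws hold. Moreover fst (t^δ s) = s for all s. -/

import Mathlib

/-- Interpretation of a container `S ◁ P`: `⟦S ◁ P⟧ X = Σ s : S, P s → X`. -/
def W {S : Type} (P : S → Type) (X : Type) : Type := Σ s : S, P s → X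

/-- Functorial action of `⟦S ◁ P⟧`. -/
def wmap {S : Type} (P : S → Type) {X Y : Type} (f : X → Y) : W P X → W P Y :=
  fun x => ⟨x.1, f ∘ x.2⟩

lemma wmk_inj {S : Type} (P : S → Type) {X : Type} {a b : S} {f : P a → X}
    {g : P b → X} (h : (⟨a, f⟩ : W P X) = ⟨b, g⟩) : a = b ∧ HEq f g := by
  cases h; exact ⟨rfl, HEq.rfl⟩

lemma eta_cast {S : Type} (P : S → Type) {X : Type} (x : W P X) (s : S) (h : x.1 = s) :
    x = ⟨s, fun p => x.2 (cast (congrArg P h).symm p)⟩ := by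
  cases x; cases h; rfl

/-- If `(D, ε, δ)` is a comonad on Set whose underlying functor is the
interpretation of the container `S ◁ P`, then the shape of a data-structure is
preserved by `δ` (`fst (t^δ s) = s`) and the operations
`s ↓ p = snd (t^δ s) p`, `o {s} = q^ε {s} ⋆`, `p ⊕ p' = q^δ {s} (p, p')`
(obtained by quoting `e ∘ ε` and `m ∘ δ`) satisfy the five directed container
laws (laws 4 and 5 stated with `HEq`, as the position types agree only
propositionally). -/
theorem comonad_on_container_is_directed_container {S : Type} (P : S → Type)
    (ε : ∀ X : Type, W P X → X) (δ : ∀ X : Type, W P X → W P (W P X))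
    (hεnat : ∀ (X Y : Type) (f : X → Y) (x : W P X), ε Y (wmap P f x) = f (ε X x))
    (hδnat : ∀ (X Y : Type) (f : X → Y) (x : W P X),
      δ Y (wmap P f x) = wmap P (wmap P f) (δ X x))
    (hrightcounit : ∀ (X : Type) (x : W P X), wmap P (ε X) (δ X x) = x)
    (hleftcounit : ∀ (X : Type) (x : W P X), ε (W P X) (δ X x) = x)
    (hcoassoc : ∀ (X : Type) (x : W P X), wmap P (δ X) (δ X x) = δ (W P X) (δ X x)) :
    ∃ hfst : ∀ s : S, (δ (P s) ⟨s, fun p => p⟩).1 = s,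
      let dn : ∀ s : S, P s → S := fun s p =>
        ((δ (P s) ⟨s, fun p => p⟩).2 (cast (congrArg P (hfst s)).symm p)).1
      let root : ∀ s : S, P s := fun s => ε (P s) ⟨s, fun p => p⟩
      let add : ∀ (s : S) (p : P s), P (dn s p) → P s := fun s p p' =>
        ((δ (P s) ⟨s, fun p => p⟩).2 (cast (congrArg P (hfst s)).symm p)).2 p'
      (∀ s : S, dn s (root s) = s) ∧
      (∀ (s : S) (p : P s) (p' : P (dn s p)), dn s (add s p p') = dn (dn s p) p') ∧
      (∀ (s : S) (p : P s), add s p (root (dn s p)) = p) ∧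
      (∀ (s : S) (p : P s) (phat : P (dn s (root s))),
        HEq p phat → add s (root s) phat = p) ∧
      (∀ (s : S) (p : P s) (p' : P (dn s p))
        (q : P (dn s (add s p p'))) (q' : P (dn (dn s p) p')),
        HEq q q' → add s (add s p p') q = add s p (add (dn s p) p' q')) := by
  have hfst : ∀ s : S, (δ (P s) ⟨s, fun p => p⟩).1 = s := fun s =>
    congrArg Sigma.fst (hrightcounit (P s) ⟨s, fun p => p⟩)
  refine ⟨hfst, ?_⟩
  intro dn root add
  have hc : ∀ s : S, δ (P s) ⟨s, fun p => p⟩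
      = (⟨s, fun p => ⟨dn s p, add s p⟩⟩ : W P (W P (P s))) := fun s =>
    eta_cast P (δ (P s) ⟨s, fun p => p⟩) s (hfst s)
  have hε : ∀ (X : Type) (x : W P X), ε X x = x.2 (root x.1) := fun X x =>
    hεnat (P x.1) X x.2 ⟨x.1, fun p => p⟩
  have hδ : ∀ (X : Type) (x : W P X),
      δ X x = ⟨x.1, fun p => ⟨dn x.1 p, fun p' => x.2 (add x.1 p p')⟩⟩ := by
    intro X x
    have h1 := hδnat (P x.1) X x.2 ⟨x.1, fun p => p⟩
    rw [hc x.1] at h1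
    exact h1
  -- Law 1 and Law 4 from the left counit law
  have hlc : ∀ s : S,
      (⟨dn s (root s), add s (root s)⟩ : W P (P s)) = ⟨s, fun p => p⟩ := by
    intro s
    have h := hleftcounit (P s) ⟨s, fun p => p⟩
    rw [hc] at h
    exact (hε (W P (P s)) ⟨s, fun p => ⟨dn s p, add s p⟩⟩).symm.trans h
  have law1 : ∀ s : S, dn s (root s) = s := fun s => congrArg Sigma.fst (hlc s)
  have law4 : ∀ (s : S) (p : P s) (phat : P (dn s (root s))),
      HEq p phat → add s (root s) phat = p := by
    intro s p phat hpp
    have h := hlc s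
    exact congr_heq (wmk_inj P h).2 hpp.symm
  -- Law 3 from the right counit law
  have law3 : ∀ (s : S) (p : P s), add s p (root (dn s p)) = p := by
    intro s p
    have h := hrightcounit (P s) ⟨s, fun p => p⟩
    rw [hc] at h
    have h2 : (fun p => add s p (root (dn s p))) = (fun p : P s => p) := by
      funext p
      exact (hε (P s) ⟨dn s p, add s p⟩).symm.trans (congrFun (eq_of_heq (wmk_inj P h).2) p)
    exact congrFun h2 p
  -- Laws 2 and 5 from coassociativity
  have hco : ∀ (s : S) (p : P s),
      (⟨dn s p, fun p' => (⟨dn (dn s p) p', fun q' => add s p (add (dn s p) p' q')⟩ :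
          W P (P s))⟩ : W P (W P (P s)))
      = ⟨dn s p, fun p' => ⟨dn s (add s p p'), add s (add s p p')⟩⟩ := by
    intro s p
    have h := hcoassoc (P s) ⟨s, fun p => p⟩
    rw [hc] at h
    have h' := congrFun (eq_of_heq (wmk_inj P
      (h.trans (hδ (W P (P s)) ⟨s, fun p => ⟨dn s p, add s p⟩⟩))).2) p
    exact (hδ (P s) ⟨dn s p, add s p⟩).symm.trans h'
  have law2 : ∀ (s : S) (p : P s) (p' : P (dn s p)),
      dn s (add s p p') = dn (dn s p) p' := by
    intro s p p'
    have h := congrFun (eq_of_heq (wmk_inj P (hco s p)).2) p'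
    exact (congrArg Sigma.fst h).symm
  have law5 : ∀ (s : S) (p : P s) (p' : P (dn s p))
      (q : P (dn s (add s p p'))) (q' : P (dn (dn s p) p')),
      HEq q q' → add s (add s p p') q = add s p (add (dn s p) p' q') := by
    intro s p p' q q' hqq
    have h := congrFun (eq_of_heq (wmk_inj P (hco s p)).2) p'
    exact (congr_heq (wmk_inj P h).2 hqq.symm).symm
  exact ⟨law1, law2, law3, law4, law5⟩
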